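/- For every integer m ≥ 1 and every integer ℓ ≥ 0, the series ∑_{k ≥ 0} (k+1)^{(m)} · k^ℓ / 2^k converges (where x^{(m)} = x(x+1)···(x+m-1) is the rising factorial and 0^0 = 1) and r_{m,ℓ} = (1/(2^{m+1} · m!)) · ∑_{k ≥ 0} (k+1)^{(m)} · k^ℓ / 2^k. -/

import Mathlib

/-- `IsBPA m ℓ f` : `f` encodes a barred preferential arrangement of `[ℓ]` with `m` bars.
Each element of `[ℓ]` is assigned a section (one of the `m + 1` sections determined by the
`m` bars) together with a rank inside its section (ties are allowed: elements of the same
section with the same rank form a block); within each section the set of ranks actually used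
must be an initial segment `{0, …, t-1}`, so that `f` determines, for each section, an
ordered partition of the elements assigned to it into nonempty blocks. -/
def IsBPA (m ℓ : ℕ) (f : Fin ℓ → Fin (m + 1) × Fin ℓ) : Prop :=
  ∀ x : Fin ℓ, ∀ r : Fin ℓ, r < (f x).2 → ∃ y : Fin ℓ, (f y).1 = (f x).1 ∧ (f y).2 = r

instance (m ℓ : ℕ) : DecidablePred (IsBPA m ℓ) := fun f => by unfold IsBPA; infer_instance

/-- `bpa m ℓ` : the number of barred preferential arrangements of `[ℓ]` with `m` bars.
In particular `bpa 0 ℓ` is the number of preferential arrangements of `[ℓ]`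
(the Fubini / ordered Bell number `r_ℓ`). -/
def bpa (m ℓ : ℕ) : ℕ :=
  Fintype.card { f : Fin ℓ → Fin (m + 1) × Fin ℓ // IsBPA m ℓ f }

namespace BPAaux

open Finset

/-! ### Partial sums and section lookup -/

/-- Partial sums of a sequence. -/
def psum (u : ℕ → ℕ) (i : ℕ) : ℕ := ∑ r ∈ Finset.range i, u r

lemma psum_mono (u : ℕ → ℕ) {a b : ℕ} (h : a ≤ b) : psum u a ≤ psum u b :=
  Finset.sum_le_sum_of_subset (Finset.range_subset_range.2 h)

lemma psum_succ (u : ℕ → ℕ) (i : ℕ) : psum u (i + 1) = psum u i + u i :=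
  Finset.sum_range_succ u i

/-- The section containing position `v`. -/
def sec (m : ℕ) (u : ℕ → ℕ) (v : ℕ) : ℕ := Nat.findGreatest (fun i => psum u i ≤ v) m

lemma sec_le (m : ℕ) (u : ℕ → ℕ) (v : ℕ) : sec m u v ≤ m := Nat.findGreatest_le m

lemma psum_sec_le (m : ℕ) (u : ℕ → ℕ) (v : ℕ) : psum u (sec m u v) ≤ v :=
  Nat.findGreatest_spec (P := fun i => psum u i ≤ v) (Nat.zero_le m)
    (show psum u 0 ≤ v by simp [psum])

lemma lt_psum_sec_succ {m : ℕ} {u : ℕ → ℕ} {v : ℕ} (hv : v < psum u (m + 1)) :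
    v < psum u (sec m u v + 1) := by
  by_contra h
  push_neg at h
  have hsec : sec m u v ≠ m := by
    rintro hEq
    rw [hEq] at h
    omega
  have hlt : sec m u v < m := lt_of_le_of_ne (sec_le m u v) hsec
  exact Nat.findGreatest_is_greatest (Nat.lt_succ_self _) hlt h

lemma sec_eq {m s v : ℕ} {u : ℕ → ℕ} (hs : s ≤ m) (h1 : psum u s ≤ v)
    (h2 : v < psum u (s + 1)) : sec m u v = s := by
  have hge : s ≤ sec m u v := Nat.le_findGreatest (P := fun i => psum u i ≤ v) hs h1
  rcases Nat.lt_or_ge s (sec m u v) with h | h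
  · exfalso
    have h3 := psum_sec_le m u v
    have h4 := psum_mono u (show s + 1 ≤ sec m u v from h)
    omega
  · exact le_antisymm h hge

/-- A downward closed finset of naturals is an initial segment. -/
lemma dc_eq_range (V : Finset ℕ) (h : ∀ a ∈ V, ∀ b < a, b ∈ V) : V = Finset.range V.card := by
  have hsub : V ⊆ Finset.range V.card := by
    intro a ha
    rw [Finset.mem_range]
    have h1 : Finset.range (a + 1) ⊆ V := by
      intro b hb
      rw [Finset.mem_range, Nat.lt_succ_iff] at hb
      rcases Nat.lt_or_eq_of_le hb with hb' | hb'
      · exact h a ha b hb'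
      · exact hb' ▸ ha
    have h2 := Finset.card_le_card h1
    rw [Finset.card_range] at h2
    omega
  exact Finset.eq_of_subset_of_card_le hsub (by simp)

/-! ### Data extracted from a barred preferential arrangement -/

variable (m ℓ : ℕ)

/-- Extension of a `Fin (m+1)`-tuple to `ℕ` by zero. -/
def extt (t : Fin (m + 1) → ℕ) : ℕ → ℕ := fun i => if h : i < m + 1 then t ⟨i, h⟩ else 0

lemma extt_apply (t : Fin (m + 1) → ℕ) (s : Fin (m + 1)) : extt m t (s : ℕ) = t s := by
  dsimp only [extt]; rw [dif_pos s.isLt]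

lemma sum_eq_psum (t : Fin (m + 1) → ℕ) : ∑ s, t s = psum (extt m t) (m + 1) := by
  rw [psum, ← Fin.sum_univ_eq_sum_range]
  exact Finset.sum_congr rfl fun s _ => (extt_apply m t s).symm

/-- The set of ranks used in section `s`. -/
def Uf (f : Fin ℓ → Fin (m + 1) × Fin ℓ) (s : Fin (m + 1)) : Finset ℕ :=
  (Finset.univ.filter fun x => (f x).1 = s).image fun x => ((f x).2 : ℕ)

/-- The number of blocks in section `s`. -/
def tf (f : Fin ℓ → Fin (m + 1) × Fin ℓ) (s : Fin (m + 1)) : ℕ := (Uf m ℓ f s).card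

/-- The total number of blocks. -/
def jf (f : Fin ℓ → Fin (m + 1) × Fin ℓ) : ℕ := ∑ s, tf m ℓ f s

/-- The global block index of element `x`. -/
def σf (f : Fin ℓ → Fin (m + 1) × Fin ℓ) (x : Fin ℓ) : ℕ :=
  psum (extt m (tf m ℓ f)) ((f x).1 : ℕ) + ((f x).2 : ℕ)

lemma mem_Uf (f : Fin ℓ → Fin (m + 1) × Fin ℓ) (x : Fin ℓ) :
    ((f x).2 : ℕ) ∈ Uf m ℓ f ((f x).1) := by
  apply Finset.mem_image_of_mem
  simp

lemma Uf_eq_range {f : Fin ℓ → Fin (m + 1) × Fin ℓ} (hf : IsBPA m ℓ f) (s : Fin (m + 1)) :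
    Uf m ℓ f s = Finset.range (tf m ℓ f s) := by
  apply dc_eq_range
  intro a ha b hb
  simp only [Uf, Finset.mem_image, Finset.mem_filter, Finset.mem_univ, true_and] at ha ⊢
  obtain ⟨x, hx1, hx2⟩ := ha
  have hbl : b < ℓ := by
    have := (f x).2.isLt
    omega
  obtain ⟨y, hy1, hy2⟩ := hf x ⟨b, hbl⟩ (by rw [Fin.lt_def]; simp; omega)
  exact ⟨y, hy1.trans hx1, by rw [hy2]⟩

lemma rank_lt {f : Fin ℓ → Fin (m + 1) × Fin ℓ} (hf : IsBPA m ℓ f) (x : Fin ℓ) :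
    ((f x).2 : ℕ) < tf m ℓ f ((f x).1) := by
  have := mem_Uf m ℓ f x
  rw [Uf_eq_range m ℓ hf, Finset.mem_range] at this
  exact this

lemma tf_le_jf (f : Fin ℓ → Fin (m + 1) × Fin ℓ) (s : Fin (m + 1)) :
    tf m ℓ f s ≤ jf m ℓ f :=
  Finset.single_le_sum (fun i _ => Nat.zero_le _) (Finset.mem_univ s)

lemma σf_lt {f : Fin ℓ → Fin (m + 1) × Fin ℓ} (hf : IsBPA m ℓ f) (x : Fin ℓ) :
    σf m ℓ f x < jf m ℓ f := by
  have h1 : σf m ℓ f x < psum (extt m (tf m ℓ f)) (((f x).1 : ℕ) + 1) := by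
    rw [psum_succ, extt_apply]
    exact Nat.add_lt_add_left (rank_lt m ℓ hf x) _
  have h2 : psum (extt m (tf m ℓ f)) (((f x).1 : ℕ) + 1) ≤
      psum (extt m (tf m ℓ f)) (m + 1) := psum_mono _ (by have := (f x).1.isLt; omega)
  rw [jf, sum_eq_psum]
  omega

lemma σf_surj_nat {f : Fin ℓ → Fin (m + 1) × Fin ℓ} (hf : IsBPA m ℓ f) {v : ℕ}
    (hv : v < jf m ℓ f) : ∃ x, σf m ℓ f x = v := by
  have hv' : v < psum (extt m (tf m ℓ f)) (m + 1) := by rw [← sum_eq_psum]; exact hv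
  have hsle : sec m (extt m (tf m ℓ f)) v ≤ m := sec_le m _ v
  have h1 : psum (extt m (tf m ℓ f)) (sec m (extt m (tf m ℓ f)) v) ≤ v := psum_sec_le m _ v
  have h2 : v < psum (extt m (tf m ℓ f)) (sec m (extt m (tf m ℓ f)) v + 1) :=
    lt_psum_sec_succ hv'
  rw [psum_succ] at h2
  have hus : extt m (tf m ℓ f) (sec m (extt m (tf m ℓ f)) v)
      = tf m ℓ f ⟨sec m (extt m (tf m ℓ f)) v, by omega⟩ :=
    extt_apply m (tf m ℓ f) ⟨sec m (extt m (tf m ℓ f)) v, by omega⟩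
  have hmem : v - psum (extt m (tf m ℓ f)) (sec m (extt m (tf m ℓ f)) v)
      ∈ Uf m ℓ f ⟨sec m (extt m (tf m ℓ f)) v, by omega⟩ := by
    rw [Uf_eq_range m ℓ hf, Finset.mem_range]
    have : tf m ℓ f ⟨sec m (extt m (tf m ℓ f)) v, by omega⟩
        = extt m (tf m ℓ f) (sec m (extt m (tf m ℓ f)) v) := hus.symm
    omega
  simp only [Uf, Finset.mem_image, Finset.mem_filter, Finset.mem_univ, true_and] at hmem
  obtain ⟨x, hx1, hx2⟩ := hmem
  refine ⟨x, ?_⟩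
  rw [σf, hx1, hx2]
  simp only [Fin.val_mk]
  omega

/-! ### The two maps of the equivalence -/

/-- Reconstructing a barred preferential arrangement from a global surjection and
a sequence of section sizes. -/
def Ψf (u : ℕ → ℕ) (σ : Fin ℓ → ℕ) (hσ : ∀ x, σ x < ℓ) : Fin ℓ → Fin (m + 1) × Fin ℓ :=
  fun x => (⟨sec m u (σ x), Nat.lt_succ_of_le (sec_le m u (σ x))⟩,
            ⟨σ x - psum u (sec m u (σ x)), Nat.lt_of_le_of_lt (Nat.sub_le _ _) (hσ x)⟩)

lemma isBPA_Ψf {j : ℕ} (hjl : j ≤ ℓ) (t : Fin (m + 1) → ℕ) (ht : ∑ s, t s = j)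
    (σ : Fin ℓ → Fin j) (hσ : Function.Surjective σ) :
    IsBPA m ℓ (Ψf m ℓ (extt m t) (fun x => (σ x : ℕ))
      (fun x => lt_of_lt_of_le (σ x).isLt hjl)) := by
  intro x r hr
  have hjpsum : j = psum (extt m t) (m + 1) := by rw [← ht]; exact sum_eq_psum m t
  have hx1 : psum (extt m t) (sec m (extt m t) (σ x)) ≤ (σ x : ℕ) := psum_sec_le m _ _
  have hx2 : ((σ x : ℕ)) < psum (extt m t) (sec m (extt m t) (σ x) + 1) :=
    lt_psum_sec_succ (by rw [← hjpsum]; exact (σ x).isLt)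
  rw [psum_succ] at hx2
  have hrv : (r : ℕ) < (σ x : ℕ) - psum (extt m t) (sec m (extt m t) (σ x)) := hr
  have hv : psum (extt m t) (sec m (extt m t) (σ x)) + (r : ℕ) < j := by
    have := (σ x).isLt
    omega
  obtain ⟨y, hy⟩ := hσ ⟨psum (extt m t) (sec m (extt m t) (σ x)) + (r : ℕ), hv⟩
  have hyval : (σ y : ℕ) = psum (extt m t) (sec m (extt m t) (σ x)) + (r : ℕ) := by rw [hy]
  have hsy : sec m (extt m t) (σ y) = sec m (extt m t) (σ x) := by
    apply sec_eq (sec_le m (extt m t) (σ x)) (by omega) _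
    rw [psum_succ]
    omega
  refine ⟨y, Fin.ext ?_, Fin.ext ?_⟩
  · exact hsy
  · show (σ y : ℕ) - psum (extt m t) (sec m (extt m t) (σ y)) = (r : ℕ)
    rw [hsy, hyval]
    omega

/-- The type encoding the decomposition of a barred preferential arrangement. -/
abbrev Mixed :=
  Σ j : Fin (ℓ + 1), {σ : Fin ℓ → Fin (j : ℕ) // Function.Surjective σ} ×
    {t : Fin (m + 1) → Fin ((j : ℕ) + 1) // ∑ s, ((t s : ℕ)) = (j : ℕ)}

lemma σf_bundled_surj {f : Fin ℓ → Fin (m + 1) × Fin ℓ} (hf : IsBPA m ℓ f) :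
    Function.Surjective (fun x => (⟨σf m ℓ f x, σf_lt m ℓ hf x⟩ : Fin (jf m ℓ f))) := by
  intro v
  obtain ⟨x, hx⟩ := σf_surj_nat m ℓ hf v.isLt
  exact ⟨x, Fin.ext hx⟩

lemma jf_le {f : Fin ℓ → Fin (m + 1) × Fin ℓ} (hf : IsBPA m ℓ f) : jf m ℓ f ≤ ℓ := by
  have := Fintype.card_le_of_surjective _ (σf_bundled_surj m ℓ hf)
  simpa using this

/-- The forward map. -/
def Φ (p : { f : Fin ℓ → Fin (m + 1) × Fin ℓ // IsBPA m ℓ f }) : Mixed m ℓ :=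
  ⟨⟨jf m ℓ p.1, Nat.lt_succ_of_le (jf_le m ℓ p.2)⟩,
   ⟨fun x => ⟨σf m ℓ p.1 x, σf_lt m ℓ p.2 x⟩, σf_bundled_surj m ℓ p.2⟩,
   ⟨fun s => ⟨tf m ℓ p.1 s, Nat.lt_succ_of_le (tf_le_jf m ℓ p.1 s)⟩, rfl⟩⟩

/-- The backward map. -/
def Ψ (q : Mixed m ℓ) : { f : Fin ℓ → Fin (m + 1) × Fin ℓ // IsBPA m ℓ f } :=
  ⟨Ψf m ℓ (extt m (fun s => ((q.2.2.1 s : ℕ)))) (fun x => ((q.2.1.1 x : ℕ)))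
      (fun x => lt_of_lt_of_le (q.2.1.1 x).isLt (Nat.lt_succ_iff.mp (q.1).isLt)),
   isBPA_Ψf m ℓ (Nat.lt_succ_iff.mp (q.1).isLt) _ q.2.2.2 q.2.1.1 q.2.1.2⟩

lemma left_inv (p : { f : Fin ℓ → Fin (m + 1) × Fin ℓ // IsBPA m ℓ f }) :
    Ψ m ℓ (Φ m ℓ p) = p := by
  obtain ⟨f, hf⟩ := p
  apply Subtype.ext
  funext x
  have hsec : sec m (extt m (tf m ℓ f)) (σf m ℓ f x) = ((f x).1 : ℕ) := by
    apply sec_eq (Nat.lt_succ_iff.mp (f x).1.isLt)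
    · exact Nat.le_add_right _ _
    · rw [psum_succ, extt_apply]
      exact Nat.add_lt_add_left (rank_lt m ℓ hf x) _
  have h2 : σf m ℓ f x - psum (extt m (tf m ℓ f)) (sec m (extt m (tf m ℓ f)) (σf m ℓ f x))
      = ((f x).2 : ℕ) := by
    rw [hsec, σf]
    omega
  exact Prod.ext (Fin.ext hsec) (Fin.ext h2)

lemma mixed_ext (q q' : Mixed m ℓ) (h1 : ((q.1 : ℕ)) = (q'.1 : ℕ))
    (h2 : ∀ x, ((q.2.1.1 x : ℕ)) = ((q'.2.1.1 x : ℕ)))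
    (h3 : ∀ s, ((q.2.2.1 s : ℕ)) = ((q'.2.2.1 s : ℕ))) : q = q' := by
  obtain ⟨j, ⟨σ, hσ⟩, ⟨t, ht⟩⟩ := q
  obtain ⟨j', ⟨σ', hσ'⟩, ⟨t', ht'⟩⟩ := q'
  have hj : j = j' := Fin.ext h1
  subst hj
  have e1 : σ = σ' := funext fun x => Fin.ext (h2 x)
  have e2 : t = t' := funext fun s => Fin.ext (h3 s)
  subst e1
  subst e2
  rfl

lemma Uf_Ψf {j : ℕ} (hjl : j ≤ ℓ) (t : Fin (m + 1) → ℕ) (ht : ∑ s, t s = j)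
    (σ : Fin ℓ → Fin j) (hσ : Function.Surjective σ) (s : Fin (m + 1)) :
    Uf m ℓ (Ψf m ℓ (extt m t) (fun x => (σ x : ℕ))
      (fun x => lt_of_lt_of_le (σ x).isLt hjl)) s = Finset.range (t s) := by
  have hjpsum : j = psum (extt m t) (m + 1) := by rw [← ht]; exact sum_eq_psum m t
  ext a
  simp only [Uf, Ψf, Finset.mem_image, Finset.mem_filter, Finset.mem_univ, true_and,
    Finset.mem_range]
  constructor
  · rintro ⟨x, hx1, hx2⟩
    have hx1' : sec m (extt m t) (σ x) = (s : ℕ) := by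
      have := congrArg Fin.val (Finset.mem_filter.mp hx1).2
      simpa using this
    have h1 : psum (extt m t) (sec m (extt m t) (σ x)) ≤ (σ x : ℕ) := psum_sec_le m _ _
    have h2 : ((σ x : ℕ)) < psum (extt m t) (sec m (extt m t) (σ x) + 1) :=
      lt_psum_sec_succ (by rw [← hjpsum]; exact (σ x).isLt)
    rw [psum_succ] at h2
    have hext : extt m t (sec m (extt m t) (σ x)) = t s := by
      rw [hx1']; exact extt_apply m t s
    omega
  · intro ha
    have hvlt : psum (extt m t) (s : ℕ) + a < j := by
      have h2 : psum (extt m t) ((s : ℕ) + 1) ≤ psum (extt m t) (m + 1) :=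
        psum_mono _ (by have := s.isLt; omega)
      have h3 : psum (extt m t) ((s : ℕ) + 1) = psum (extt m t) (s : ℕ) + t s := by
        rw [psum_succ, extt_apply]
      omega
    obtain ⟨y, hy⟩ := hσ ⟨psum (extt m t) (s : ℕ) + a, hvlt⟩
    have hyval : (σ y : ℕ) = psum (extt m t) (s : ℕ) + a := by rw [hy]
    have hsy : sec m (extt m t) (σ y) = (s : ℕ) := by
      apply sec_eq (Nat.lt_succ_iff.mp s.isLt) (by omega)
      rw [psum_succ, extt_apply]
      omega
    refine ⟨y, Finset.mem_filter.mpr ⟨Finset.mem_univ _, Fin.ext ?_⟩, ?_⟩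
    · exact hsy
    · show (σ y : ℕ) - psum (extt m t) (sec m (extt m t) (σ y)) = a
      rw [hsy, hyval]
      omega

lemma right_inv (q : Mixed m ℓ) : Φ m ℓ (Ψ m ℓ q) = q := by
  obtain ⟨j, ⟨σ, hσ⟩, ⟨t, ht⟩⟩ := q
  have hjl : (j : ℕ) ≤ ℓ := Nat.lt_succ_iff.mp j.isLt
  -- the reconstructed arrangement
  have htf : ∀ s, tf m ℓ (Ψ m ℓ ⟨j, ⟨σ, hσ⟩, ⟨t, ht⟩⟩).1 s = ((t s : ℕ)) := by
    intro s
    show (Uf m ℓ _ s).card = _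
    rw [show (Ψ m ℓ ⟨j, ⟨σ, hσ⟩, ⟨t, ht⟩⟩).1
        = Ψf m ℓ (extt m (fun s => ((t s : ℕ)))) (fun x => ((σ x : ℕ)))
          (fun x => lt_of_lt_of_le (σ x).isLt hjl) from rfl,
      Uf_Ψf m ℓ hjl _ ht σ hσ s, Finset.card_range]
  have hjf : jf m ℓ (Ψ m ℓ ⟨j, ⟨σ, hσ⟩, ⟨t, ht⟩⟩).1 = (j : ℕ) := by
    rw [jf]
    exact (Finset.sum_congr rfl fun s _ => htf s).trans ht
  have hext : extt m (tf m ℓ (Ψ m ℓ ⟨j, ⟨σ, hσ⟩, ⟨t, ht⟩⟩).1)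
      = extt m (fun s => ((t s : ℕ))) := by
    apply congrArg (extt m)
    exact funext htf
  have hσf : ∀ x, σf m ℓ (Ψ m ℓ ⟨j, ⟨σ, hσ⟩, ⟨t, ht⟩⟩).1 x = ((σ x : ℕ)) := by
    intro x
    have h1 : psum (extt m (fun s => ((t s : ℕ))))
        (sec m (extt m (fun s => ((t s : ℕ)))) (σ x)) ≤ (σ x : ℕ) := psum_sec_le m _ _
    rw [σf, hext]
    show psum (extt m fun s => ((t s : ℕ))) (sec m (extt m fun s => ((t s : ℕ))) (σ x)) +
        ((σ x : ℕ) - psum (extt m fun s => ((t s : ℕ)))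
          (sec m (extt m fun s => ((t s : ℕ))) (σ x))) = (σ x : ℕ)
    omega
  apply mixed_ext
  · exact hjf
  · intro x
    exact hσf x
  · intro s
    exact htf s

/-- The main equivalence. -/
def mixedEquiv : { f : Fin ℓ → Fin (m + 1) × Fin ℓ // IsBPA m ℓ f } ≃ Mixed m ℓ :=
  ⟨Φ m ℓ, Ψ m ℓ, left_inv m ℓ, right_inv m ℓ⟩

/-! ### Counting -/

/-- The number of surjections from `Fin ℓ` onto `Fin j`. -/
def surjCard (n j : ℕ) : ℕ := Fintype.card {σ : Fin n → Fin j // Function.Surjective σ}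

lemma surjCard_eq_zero {n j : ℕ} (h : n < j) : surjCard n j = 0 := by
  rw [surjCard, Fintype.card_eq_zero_iff]
  constructor
  rintro ⟨σ, hσ⟩
  have := Fintype.card_le_of_surjective σ hσ
  simp only [Fintype.card_fin] at this
  omega

lemma card_sum_multiset {α β : Type*} (s : Finset β) (g : β → Multiset α) :
    Multiset.card (∑ i ∈ s, g i) = ∑ i ∈ s, Multiset.card (g i) := by
  induction s using Finset.cons_induction <;> simp [*]

/-- Bar data is equivalent to multisets. -/
def barEquiv (m j : ℕ) :
    {t : Fin (m + 1) → Fin (j + 1) // ∑ s, ((t s : ℕ)) = j} ≃ Sym (Fin (m + 1)) j where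
  toFun t := ⟨∑ s : Fin (m + 1), Multiset.replicate ((t.1 s : ℕ)) s, by
    rw [card_sum_multiset]
    simp only [Multiset.card_replicate]
    exact t.2⟩
  invFun μ := ⟨fun s => ⟨μ.1.count s, Nat.lt_succ_of_le
      (le_trans (Multiset.count_le_card s μ.1) (le_of_eq μ.2))⟩, by
    have h := Multiset.sum_count_eq_card (s := (Finset.univ : Finset (Fin (m + 1))))
      (m := μ.1) (fun a _ => Finset.mem_univ a)
    simp only [Fin.val_mk]
    rw [h, μ.2]⟩
  left_inv t := by
    apply Subtype.ext
    funext s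
    apply Fin.ext
    simp [Multiset.count_sum', Multiset.count_replicate]
  right_inv μ := by
    apply Subtype.ext
    show ∑ s : Fin (m + 1), Multiset.replicate (μ.1.count s) s = μ.1
    rw [← Finset.sum_subset (Finset.subset_univ μ.1.toFinset)
      (fun s _ hs => by
        rw [Multiset.count_eq_zero_of_notMem (by simpa using hs)]
        rfl)]
    conv_rhs => rw [← Multiset.toFinset_sum_count_nsmul_eq μ.1]
    exact Finset.sum_congr rfl fun s _ => (Multiset.nsmul_singleton s _).symm

lemma barCard (m j : ℕ) :
    Fintype.card {t : Fin (m + 1) → Fin (j + 1) // ∑ s, ((t s : ℕ)) = j}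
      = (j + m).choose m := by
  rw [Fintype.card_congr (barEquiv m j), Sym.card_sym_eq_choose, Fintype.card_fin]
  rw [show m + 1 + j - 1 = j + m by omega]
  rw [show (j + m).choose j = (j + m).choose m from Nat.choose_symm_add]

lemma bpa_eq_sum (m ℓ : ℕ) :
    bpa m ℓ = ∑ j ∈ Finset.range (ℓ + 1), surjCard ℓ j * (j + m).choose m := by
  rw [bpa, Fintype.card_congr (mixedEquiv m ℓ), Fintype.card_sigma,
    ← Fin.sum_univ_eq_sum_range (fun j => surjCard ℓ j * (j + m).choose m) (ℓ + 1)]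
  refine Finset.sum_congr rfl fun j _ => ?_
  rw [Fintype.card_prod, barCard]
  rfl

/-- Functions with prescribed image are equivalent to surjections. -/
noncomputable def imageFiberEquiv (n k : ℕ) (S : Finset (Fin k)) :
    {f : Fin n → Fin k // Finset.univ.image f = S} ≃
      {σ : Fin n → Fin S.card // Function.Surjective σ} where
  toFun f := ⟨fun x => S.equivFin ⟨f.1 x, by
      have h := Finset.mem_image_of_mem f.1 (Finset.mem_univ x)
      rwa [f.2] at h⟩, by
    intro b
    have ha' : ((S.equivFin.symm b : {a // a ∈ S}) : Fin k) ∈ Finset.univ.image f.1 := by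
      rw [f.2]; exact (S.equivFin.symm b).2
    obtain ⟨x, _, hx⟩ := Finset.mem_image.mp ha'
    exact ⟨x, (Equiv.apply_eq_iff_eq_symm_apply S.equivFin).mpr (Subtype.ext hx)⟩⟩
  invFun σ := ⟨fun x => (S.equivFin.symm (σ.1 x) : Fin k), by
    ext a
    simp only [Finset.mem_image, Finset.mem_univ, true_and]
    constructor
    · rintro ⟨x, rfl⟩
      exact (S.equivFin.symm (σ.1 x)).2
    · intro ha
      obtain ⟨x, hx⟩ := σ.2 (S.equivFin ⟨a, ha⟩)
      exact ⟨x, by rw [hx, Equiv.symm_apply_apply]⟩⟩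
  left_inv f := by
    apply Subtype.ext
    funext x
    show ((S.equivFin.symm (S.equivFin ⟨f.1 x, _⟩) : {a // a ∈ S}) : Fin k) = f.1 x
    rw [Equiv.symm_apply_apply]
  right_inv σ := by
    apply Subtype.ext
    funext x
    show S.equivFin ⟨((S.equivFin.symm (σ.1 x) : {a // a ∈ S}) : Fin k), _⟩ = σ.1 x
    rw [show (⟨((S.equivFin.symm (σ.1 x) : {a // a ∈ S}) : Fin k), _⟩ : {a // a ∈ S})
      = S.equivFin.symm (σ.1 x) from Subtype.ext rfl, Equiv.apply_symm_apply]

lemma pow_eq_sum (n k : ℕ) :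
    k ^ n = ∑ j ∈ Finset.range (n + 1), k.choose j * surjCard n j := by
  have h0 : k ^ n = ∑ S : Finset (Fin k), surjCard n S.card := by
    have h1 : k ^ n = Fintype.card (Fin n → Fin k) := by simp
    rw [h1, ← Fintype.card_congr (Equiv.sigmaFiberEquiv
      (fun f : Fin n → Fin k => Finset.univ.image f)), Fintype.card_sigma]
    exact Finset.sum_congr rfl fun S _ =>
      (Fintype.card_congr (imageFiberEquiv n k S)).trans rfl
  rw [h0]
  have h2 := Finset.sum_fiberwise_of_maps_to (s := (Finset.univ : Finset (Finset (Fin k))))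
    (t := Finset.range (k + 1)) (g := fun S => S.card)
    (fun S _ => Finset.mem_range.mpr (by
      have h := Finset.card_le_univ S
      have h2 : Fintype.card (Fin k) = k := Fintype.card_fin k
      show S.card < k + 1
      omega))
    (fun S => surjCard n S.card)
  rw [← h2]
  have h3 : ∀ j ∈ Finset.range (k + 1),
      ∑ S ∈ Finset.filter (fun S : Finset (Fin k) => S.card = j) Finset.univ,
        surjCard n S.card = k.choose j * surjCard n j := by
    intro j _
    rw [Finset.sum_congr rfl (fun S hS => by
      rw [show S.card = j from (Finset.mem_filter.mp hS).2]),
      Finset.sum_const, Finset.univ_filter_card_eq, Finset.card_powersetCard,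
      Finset.card_univ, Fintype.card_fin, smul_eq_mul]
  rw [Finset.sum_congr rfl h3]
  -- extend both sums to `range (k + n + 2)` where the extra terms vanish
  rw [Finset.sum_subset (Finset.range_subset_range.mpr (show k + 1 ≤ k + n + 2 by omega))
    (fun j _ hj => by
      rw [Nat.choose_eq_zero_of_lt (by simp at hj; omega), Nat.zero_mul]),
    Finset.sum_subset (Finset.range_subset_range.mpr (show n + 1 ≤ k + n + 2 by omega))
    (fun j _ hj => by
      rw [surjCard_eq_zero (by simp at hj; omega), Nat.mul_zero])]

/-! ### Analysis -/

lemma choose_mul_choose (m j k : ℕ) :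
    (k + m).choose m * k.choose j = (m + j).choose m * (k + m).choose (m + j) := by
  by_cases h : j ≤ k
  · have h1 := Nat.choose_mul (n := k + m)
      (show m ≤ m + j from Nat.le_add_right m j)
    rw [show k + m - m = k by omega, show m + j - m = j by omega] at h1
    rw [← h1, Nat.mul_comm]
  · rw [Nat.choose_eq_zero_of_lt (show k < j by omega),
      Nat.choose_eq_zero_of_lt (show k + m < m + j by omega)]
    simp

lemma hasSum_core (m j : ℕ) :
    HasSum (fun k : ℕ => (((k + m).choose (m + j) : ℝ)) * (1 / 2) ^ k)
      ((2 : ℝ) ^ (m + 1)) := by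
  have hr : ‖(1 / 2 : ℝ)‖ < 1 := by rw [Real.norm_eq_abs]; rw [abs_of_pos] <;> norm_num
  have H1 := hasSum_choose_mul_geometric_of_norm_lt_one (𝕜 := ℝ) (m + j) hr
  have H2 := H1.mul_left ((1 / 2 : ℝ) ^ j)
  have H3 : HasSum (fun i : ℕ => (((i + j + m).choose (m + j) : ℝ)) * (1 / 2) ^ (i + j))
      ((1 / 2 : ℝ) ^ j * (1 / (1 - 1 / 2) ^ (m + j + 1))) :=
    H2.congr_fun fun i => by
      rw [show i + j + m = i + (m + j) by omega, pow_add]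
      ring
  have hzero : ∀ k ∉ Set.range (fun i : ℕ => i + j),
      (((k + m).choose (m + j) : ℝ)) * (1 / 2) ^ k = 0 := by
    intro k hk
    have hkj : k < j := by
      by_contra hc
      exact hk ⟨k - j, by show k - j + j = k; omega⟩
    rw [Nat.choose_eq_zero_of_lt (by omega)]
    simp
  have H4 : HasSum (fun k : ℕ => (((k + m).choose (m + j) : ℝ)) * (1 / 2) ^ k)
      ((1 / 2 : ℝ) ^ j * (1 / (1 - 1 / 2) ^ (m + j + 1))) :=
    ((Function.Injective.hasSum_iff (add_left_injective j) hzero).mp H3)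
  have hval : ((1 / 2 : ℝ)) ^ j * (1 / (1 - 1 / 2) ^ (m + j + 1)) = 2 ^ (m + 1) := by
    rw [show (1 : ℝ) - 1 / 2 = 1 / 2 by norm_num, div_pow, one_pow, div_pow, one_pow,
      one_div_one_div, div_mul_eq_mul_div, one_mul, div_eq_iff (by positivity), ← pow_add,
      show m + 1 + j = m + j + 1 by omega]
  rwa [hval] at H4

end BPAaux

/-- For every `m ≥ 1` and `ℓ ≥ 0`, the series
`∑_{k ≥ 0} (k+1)^{(m)} · k^ℓ / 2^k` converges (where `x^{(m)} = x(x+1)⋯(x+m-1)` is the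
rising factorial and `0^0 = 1`), and
`r_{m,ℓ} = (1/(2^{m+1} · m!)) · ∑_{k ≥ 0} (k+1)^{(m)} · k^ℓ / 2^k`. -/
theorem bpa_eq_infinite_series (m ℓ : ℕ) (hm : 1 ≤ m) :
    Summable (fun k : ℕ => ((k + 1).ascFactorial m : ℝ) * (k : ℝ) ^ ℓ / 2 ^ k) ∧
      (bpa m ℓ : ℝ) =
        (1 / (2 ^ (m + 1) * (Nat.factorial m : ℝ))) *
          ∑' k : ℕ, ((k + 1).ascFactorial m : ℝ) * (k : ℝ) ^ ℓ / 2 ^ k := by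
  have hterm : ∀ k : ℕ, ((k + 1).ascFactorial m : ℝ) * (k : ℝ) ^ ℓ / 2 ^ k
      = ∑ j ∈ Finset.range (ℓ + 1),
          ((m.factorial : ℝ) * (BPAaux.surjCard ℓ j : ℝ)) *
            (((m + j).choose m : ℝ) * ((((k + m).choose (m + j) : ℝ)) * (1 / 2) ^ k)) := by
    intro k
    have h1 : ((k + 1).ascFactorial m : ℝ) = (m.factorial : ℝ) * ((k + m).choose m : ℝ) := by
      rw_mod_cast [Nat.ascFactorial_eq_factorial_mul_choose]
    have h2 : ((k : ℝ)) ^ ℓ = ∑ j ∈ Finset.range (ℓ + 1),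
        (k.choose j : ℝ) * (BPAaux.surjCard ℓ j : ℝ) := by
      rw_mod_cast [BPAaux.pow_eq_sum ℓ k]
    rw [h1, h2, Finset.mul_sum, Finset.sum_div]
    refine Finset.sum_congr rfl fun j _ => ?_
    have h3 : ((k + m).choose m : ℝ) * (k.choose j : ℝ)
        = ((m + j).choose m : ℝ) * ((k + m).choose (m + j) : ℝ) := by
      rw_mod_cast [BPAaux.choose_mul_choose m j k]
    have h5 : ((m.factorial : ℝ) * (BPAaux.surjCard ℓ j : ℝ)) *
          (((m + j).choose m : ℝ) * ((((k + m).choose (m + j) : ℝ)) * (1 / 2) ^ k))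
        = ((m.factorial : ℝ) * (BPAaux.surjCard ℓ j : ℝ) *
            (((m + j).choose m : ℝ) * ((k + m).choose (m + j) : ℝ))) / 2 ^ k := by
      rw [div_pow, one_pow]
      ring
    rw [h5, ← h3]
    ring
  have Hsum : HasSum (fun k : ℕ => ((k + 1).ascFactorial m : ℝ) * (k : ℝ) ^ ℓ / 2 ^ k)
      (∑ j ∈ Finset.range (ℓ + 1),
        ((m.factorial : ℝ) * (BPAaux.surjCard ℓ j : ℝ)) *
          (((m + j).choose m : ℝ) * (2 : ℝ) ^ (m + 1))) := by
    refine HasSum.congr_fun ?_ hterm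
    exact hasSum_sum fun j _ => ((BPAaux.hasSum_core m j).mul_left _).mul_left _
  have hval : ∑ j ∈ Finset.range (ℓ + 1),
      ((m.factorial : ℝ) * (BPAaux.surjCard ℓ j : ℝ)) *
        (((m + j).choose m : ℝ) * (2 : ℝ) ^ (m + 1))
      = 2 ^ (m + 1) * (m.factorial : ℝ) * (bpa m ℓ : ℝ) := by
    have hb : (bpa m ℓ : ℝ) = ∑ j ∈ Finset.range (ℓ + 1),
        (BPAaux.surjCard ℓ j : ℝ) * ((j + m).choose m : ℝ) := by
      rw_mod_cast [BPAaux.bpa_eq_sum m ℓ]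
    rw [hb, Finset.mul_sum]
    refine Finset.sum_congr rfl fun j _ => ?_
    rw [show m + j = j + m by omega]
    ring
  rw [hval] at Hsum
  refine ⟨Hsum.summable, ?_⟩
  rw [Hsum.tsum_eq]
  have hne1 : ((2 : ℝ)) ^ (m + 1) ≠ 0 := by positivity
  have hne2 : ((m.factorial : ℝ)) ≠ 0 := Nat.cast_ne_zero.mpr m.factorial_ne_zero
  field_simp
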